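/- Let γ̃(t) = (ln t, 0, …, 0) in coordinates (u, v, x) on ℝ^{n+2} with metric g = 2du dv − 2(sin(v) − ∑ aᵢ(cos xᵢ − 1)) du² + ∑ dxᵢ². Then γ̃ : (0, ∞) → ℝ^{n+2} satisfies the geodesic equation for g and is maximal (cannot be extended past t = 0). -/

import Mathlib

open scoped BigOperators

noncomputable def pd {m : ℕ} (i : Fin m) (f : (Fin m → ℝ) → ℝ) (x : Fin m → ℝ) : ℝ :=
  fderiv ℝ f x (Pi.single i 1)

noncomputable def christoffel {m : ℕ} (g : (Fin m → ℝ) → Matrix (Fin m) (Fin m) ℝ)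
    (x : Fin m → ℝ) (k i j : Fin m) : ℝ :=
  (1 / 2) * ∑ l : Fin m, (g x)⁻¹ k l *
    (pd i (fun y => g y l j) x + pd j (fun y => g y l i) x - pd l (fun y => g y i j) x)

def IsGeodesicOn {m : ℕ} (g : (Fin m → ℝ) → Matrix (Fin m) (Fin m) ℝ)
    (γ : ℝ → Fin m → ℝ) (s : Set ℝ) : Prop :=
  ContDiffOn ℝ 2 γ s ∧ ∀ t ∈ s, ∀ k : Fin m,
    deriv (deriv γ) t k =
      -∑ i : Fin m, ∑ j : Fin m, christoffel g (γ t) k i j * deriv γ t i * deriv γ t j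

/-- The metric `g = 2 du dv − 2(sin v − ∑ aᵢ(cos xᵢ − 1)) du² + ∑ dxᵢ²` on `ℝ^{n+2}`,
with coordinates `p 0 = u`, `p 1 = v`, `p (i+2) = xᵢ`. -/
noncomputable def cpMetric {n : ℕ} (a : Fin n → ℝ)
    (p : Fin (n + 2) → ℝ) : Matrix (Fin (n + 2)) (Fin (n + 2)) ℝ :=
  Matrix.of fun i j =>
    if i = 0 ∧ j = 0 then
      -2 * (Real.sin (p 1) - ∑ k : Fin n, a k * (Real.cos (p k.succ.succ) - 1))
    else if (i = 0 ∧ j = 1) ∨ (i = 1 ∧ j = 0) then 1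
    else if i = j ∧ i ≠ 0 ∧ i ≠ 1 then 1 else 0

/-- The curve `γ̃(t) = (ln t, 0, …, 0)`. -/
noncomputable def logCurve {n : ℕ} (t : ℝ) : Fin (n + 2) → ℝ := fun k =>
  if k = 0 then Real.log t else 0

section Helpers

variable {n : ℕ} (a : Fin n → ℝ)

lemma finZeroNeOne : (0 : Fin (n+2)) ≠ 1 := by simp [Fin.ext_iff]

/-- entries of the metric at a point with v = 0, x = 0 -/
lemma cpMetric_at {p : Fin (n+2) → ℝ} (hp1 : p 1 = 0)
    (hp2 : ∀ k : Fin n, p k.succ.succ = 0) (i j : Fin (n+2)) :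
    cpMetric a p i j = if j = Equiv.swap (0 : Fin (n+2)) 1 i then 1 else 0 := by
  have h00 : cpMetric a p 0 0 = 0 := by
    simp [cpMetric, hp1, fun k => hp2 k]
  by_cases hi0 : i = 0
  · subst hi0
    rw [Equiv.swap_apply_left]
    by_cases hj : j = 1
    · subst hj
      simp [cpMetric, (finZeroNeOne (n := n)).symm]
    · by_cases hj0 : j = 0
      · subst hj0; simpa [hj] using h00
      · simp [cpMetric, hj, hj0]
  · by_cases hi1 : i = 1
    · subst hi1
      rw [Equiv.swap_apply_right]
      by_cases hj : j = 0
      · subst hj; simp [cpMetric, finZeroNeOne (n := n)]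
      · simp [cpMetric, hj, (finZeroNeOne (n := n)).symm, Ne.symm hj]
    · rw [Equiv.swap_apply_of_ne_of_ne hi0 hi1]
      by_cases hj : j = i
      · subst hj; simp [cpMetric, hi0, hi1]
      · simp [cpMetric, hi0, hi1, hj, Ne.symm hj]

lemma cpMetric_inv_at {p : Fin (n+2) → ℝ} (hp1 : p 1 = 0)
    (hp2 : ∀ k : Fin n, p k.succ.succ = 0) :
    (cpMetric a p)⁻¹ = cpMetric a p := by
  apply Matrix.inv_eq_right_inv
  ext i j
  rw [Matrix.mul_apply, Matrix.one_apply]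
  simp only [cpMetric_at a hp1 hp2]
  rw [Finset.sum_congr rfl (fun l _ => by rw [ite_mul, one_mul, zero_mul]),
    Finset.sum_ite_eq' Finset.univ (Equiv.swap (0 : Fin (n+2)) 1 i)
      (fun l => if j = Equiv.swap (0 : Fin (n+2)) 1 l then 1 else 0)]
  simp [Equiv.swap_apply_self, eq_comm]

lemma pd_const {m : ℕ} (i : Fin m) (c : ℝ) (x : Fin m → ℝ) :
    pd i (fun _ => c) x = 0 := by
  rw [pd, fderiv_fun_const]; simp

lemma pd_offdiag {l j : Fin (n+2)} (h : ¬(l = 0 ∧ j = 0)) (i : Fin (n+2))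
    (p : Fin (n+2) → ℝ) :
    pd i (fun y => cpMetric a y l j) p = 0 := by
  have : (fun y : Fin (n+2) → ℝ => cpMetric a y l j)
      = fun _ => (if (l = 0 ∧ j = 1) ∨ (l = 1 ∧ j = 0) then (1:ℝ)
        else if l = j ∧ l ≠ 0 ∧ l ≠ 1 then 1 else 0) := by
    funext y; simp only [cpMetric, Matrix.of_apply, if_neg h]
  rw [this, pd_const]

lemma pd_g00 {p : Fin (n+2) → ℝ} (hp1 : p 1 = 0)
    (hp2 : ∀ k : Fin n, p k.succ.succ = 0) (i : Fin (n+2)) :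
    pd i (fun y => cpMetric a y 0 0) p = if i = 1 then -2 else 0 := by
  have hf : (fun y : Fin (n+2) → ℝ => cpMetric a y 0 0)
      = fun y => -2 * (Real.sin (y 1) - ∑ k : Fin n, a k * (Real.cos (y k.succ.succ) - 1)) := by
    funext y; simp [cpMetric]
  have hsin : HasFDerivAt (fun y : Fin (n+2) → ℝ => Real.sin (y 1))
      ((ContinuousLinearMap.proj 1 : (Fin (n+2) → ℝ) →L[ℝ] ℝ)) p := by
    have := (Real.hasDerivAt_sin (p 1)).comp_hasFDerivAt p
      (ContinuousLinearMap.proj (R := ℝ) (φ := fun _ : Fin (n+2) => ℝ) 1).hasFDerivAt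
    simpa [hp1, Function.comp_def] using this
  have hcos : ∀ k : Fin n, HasFDerivAt
      (fun y : Fin (n+2) → ℝ => a k * (Real.cos (y k.succ.succ) - 1))
      (0 : (Fin (n+2) → ℝ) →L[ℝ] ℝ) p := by
    intro k
    have h1 : HasFDerivAt (fun y : Fin (n+2) → ℝ => Real.cos (y k.succ.succ))
        (0 : (Fin (n+2) → ℝ) →L[ℝ] ℝ) p := by
      have := (Real.hasDerivAt_cos (p k.succ.succ)).comp_hasFDerivAt p
        (ContinuousLinearMap.proj (R := ℝ) (φ := fun _ : Fin (n+2) => ℝ) k.succ.succ).hasFDerivAt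
      simpa [hp2 k, Function.comp_def] using this
    have := (h1.sub_const 1).const_mul (a k)
    simpa using this
  have hsum : HasFDerivAt
      (fun y : Fin (n+2) → ℝ => ∑ k : Fin n, a k * (Real.cos (y k.succ.succ) - 1))
      (0 : (Fin (n+2) → ℝ) →L[ℝ] ℝ) p := by
    have := HasFDerivAt.fun_sum (fun k (_ : k ∈ Finset.univ) => hcos k)
    simpa using this
  have hf' : HasFDerivAt (fun y : Fin (n+2) → ℝ => cpMetric a y 0 0)
      ((-2 : ℝ) • (ContinuousLinearMap.proj 1 : (Fin (n+2) → ℝ) →L[ℝ] ℝ)) p := by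
    rw [hf]
    have h2 := (hsin.sub hsum).const_mul (-2 : ℝ)
    convert h2 using 1
    all_goals first
      | rfl
      | ext y; simp
  rw [pd, hf'.fderiv]
  by_cases h : i = 1
  · subst h; simp
  · simp [Pi.single_apply, Ne.symm h, h]

lemma christoffel_at {p : Fin (n+2) → ℝ} (hp1 : p 1 = 0)
    (hp2 : ∀ k : Fin n, p k.succ.succ = 0) (k : Fin (n+2)) :
    christoffel (cpMetric a) p k 0 0 = if k = 0 then 1 else 0 := by
  rw [christoffel, cpMetric_inv_at a hp1 hp2]
  have hterm : ∀ l : Fin (n+2),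
      (pd 0 (fun y => cpMetric a y l 0) p + pd 0 (fun y => cpMetric a y l 0) p
        - pd l (fun y => cpMetric a y 0 0) p) = if l = 1 then 2 else 0 := by
    intro l
    rw [pd_g00 a hp1 hp2 l]
    by_cases hl : l = 0
    · subst hl
      rw [pd_g00 a hp1 hp2 0]
      simp [finZeroNeOne]
    · rw [pd_offdiag a (fun h => hl h.1) 0 p]
      by_cases hl1 : l = 1 <;> simp [hl1]
  calc (1/2 : ℝ) * ∑ l : Fin (n+2), cpMetric a p k l *
      (pd 0 (fun y => cpMetric a y l 0) p + pd 0 (fun y => cpMetric a y l 0) p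
        - pd l (fun y => cpMetric a y 0 0) p)
      = (1/2 : ℝ) * ∑ l : Fin (n+2),
        (if l = Equiv.swap (0 : Fin (n+2)) 1 k then (if l = 1 then (2:ℝ) else 0) else 0) := by
        congr 1
        refine Finset.sum_congr rfl fun l _ => ?_
        rw [hterm l, cpMetric_at a hp1 hp2, ite_mul, one_mul, zero_mul]
    _ = (1/2 : ℝ) * (if Equiv.swap (0 : Fin (n+2)) 1 k = 1 then (2:ℝ) else 0) := by
        rw [Finset.sum_ite_eq' Finset.univ (Equiv.swap (0 : Fin (n+2)) 1 k)
          (fun l => if l = 1 then (2:ℝ) else 0)]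
        simp
    _ = if k = 0 then 1 else 0 := by
        by_cases hk : k = 0
        · subst hk; simp
        · rw [if_neg hk, if_neg, mul_zero]
          rw [Equiv.swap_apply_eq_iff, Equiv.swap_apply_right]
          exact hk

lemma logCurve_hasDerivAt {t : ℝ} (ht : t ≠ 0) :
    HasDerivAt (logCurve (n := n)) (fun k => if k = 0 then t⁻¹ else 0) t := by
  rw [hasDerivAt_pi]
  intro k
  by_cases hk : k = 0
  · subst hk
    simpa [logCurve] using Real.hasDerivAt_log ht
  · simpa [logCurve, hk] using hasDerivAt_const t (0 : ℝ)

lemma deriv_logCurve {t : ℝ} (ht : t ≠ 0) :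
    deriv (logCurve (n := n)) t = fun k => if k = 0 then t⁻¹ else 0 :=
  (logCurve_hasDerivAt ht).deriv

lemma deriv2_logCurve {t : ℝ} (ht : t ≠ 0) (k : Fin (n+2)) :
    deriv (deriv (logCurve (n := n))) t k = if k = 0 then -(t^2)⁻¹ else 0 := by
  have hev : deriv (logCurve (n := n)) =ᶠ[nhds t]
      (fun s => fun k : Fin (n+2) => if k = 0 then s⁻¹ else 0) := by
    filter_upwards [isOpen_ne.mem_nhds ht] with s hs
    exact deriv_logCurve hs
  rw [hev.deriv_eq]
  have h2 : HasDerivAt (fun s : ℝ => fun k : Fin (n+2) => if k = 0 then s⁻¹ else 0)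
      (fun k : Fin (n+2) => if k = 0 then -(t^2)⁻¹ else 0) t := by
    rw [hasDerivAt_pi]
    intro k
    by_cases hk : k = 0
    · subst hk; simpa using hasDerivAt_inv ht
    · simpa [hk] using hasDerivAt_const t (0 : ℝ)
  rw [h2.deriv]

lemma logCurve_contDiffOn : ContDiffOn ℝ 2 (logCurve (n := n)) (Set.Ioi 0) := by
  rw [contDiffOn_pi]
  intro k
  by_cases hk : k = 0
  · subst hk
    simp only [logCurve, if_pos rfl]
    intro x hx
    exact (Real.contDiffAt_log.mpr (ne_of_gt hx)).contDiffWithinAt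
  · simp only [logCurve, if_neg hk]
    exact contDiffOn_const

end Helpers

/-- The curve `γ̃(t) = (ln t, 0, …, 0)` satisfies the geodesic equation
of `g = 2dudv − 2(sin v − ∑ aᵢ(cos xᵢ − 1))du² + ∑ dxᵢ²` on `(0,∞)` and is maximal:
it cannot be extended as a geodesic past `t = 0`. -/
theorem stmt_18 (n : ℕ) (a : Fin n → ℝ) :
    IsGeodesicOn (cpMetric a) (logCurve (n := n)) (Set.Ioi 0) ∧
    ¬ ∃ ε : ℝ, 0 < ε ∧ ∃ δ : ℝ → Fin (n + 2) → ℝ,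
        IsGeodesicOn (cpMetric a) δ (Set.Ioi (-ε)) ∧
        ∀ t ∈ Set.Ioi (0 : ℝ), δ t = logCurve (n := n) t := by
  constructor
  · refine ⟨logCurve_contDiffOn, fun t ht k => ?_⟩
    have ht0 : t ≠ 0 := ne_of_gt ht
    have hp1 : logCurve (n := n) t 1 = 0 := by
      simp [logCurve, (finZeroNeOne (n := n)).symm]
    have hp2 : ∀ k : Fin n, logCurve (n := n) t k.succ.succ = 0 := by
      intro k; simp [logCurve, Fin.succ_ne_zero]
    rw [deriv2_logCurve ht0 k, deriv_logCurve ht0]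
    rw [Finset.sum_eq_single (0 : Fin (n+2))]
    · rw [Finset.sum_eq_single (0 : Fin (n+2))]
      · rw [christoffel_at a hp1 hp2 k]
        by_cases hk : k = 0
        · subst hk
          simp [pow_two, mul_inv]
        · simp [hk]
      · intro b _ hb
        simp [hb]
      · intro h; exact absurd (Finset.mem_univ _) h
    · intro b _ hb
      simp [hb]
    · intro h; exact absurd (Finset.mem_univ _) h
  · rintro ⟨ε, hε, δ, ⟨hsmooth, -⟩, hagree⟩
    have h0mem : (0 : ℝ) ∈ Set.Ioi (-ε) := by simpa using neg_lt_zero.mpr hε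
    have hcont : ContinuousAt δ 0 :=
      (hsmooth.continuousOn.continuousAt (isOpen_Ioi.mem_nhds h0mem))
    have hcont0 : ContinuousAt (fun t => δ t 0) 0 :=
      ((continuous_apply (0 : Fin (n+2))).continuousAt).comp hcont
    have h1 : Filter.Tendsto (fun t => δ t 0) (nhdsWithin 0 (Set.Ioi 0)) (nhds (δ 0 0)) :=
      hcont0.tendsto.mono_left nhdsWithin_le_nhds
    have h2 : Filter.Tendsto (fun t => δ t 0) (nhdsWithin 0 (Set.Ioi 0)) Filter.atBot := by
      refine Real.tendsto_log_nhdsGT_zero.congr' ?_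
      filter_upwards [self_mem_nhdsWithin] with t htpos
      rw [hagree t htpos]
      simp [logCurve]
    exact not_tendsto_nhds_of_tendsto_atBot h2 (δ 0 0) h1
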